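/- arXiv:2603.16308 — 6 statements merged into one kernel-verified Lean document; each statement's English description precedes it below -/
import Mathlib

section
/- For every natural number n ≥ 1 there exists an L_{conv,≤}-sentence σ such that 𝔐^n ⊨ σ but 𝔐^{n+1} ⊭ σ; consequently the first-order theory of 𝔐^n is different from the first-order theory of 𝔐^{n+1}. -/
open FirstOrder

/-- A rational open half-space in ℝ^n: `{x | c·x < d}` with `c ∈ ℚ^n` nonzero, `d ∈ ℚ`. -/
def IsRatHalfSpace (n : ℕ) (s : Set (Fin n → ℝ)) : Prop :=
  ∃ (c : Fin n → ℚ) (d : ℚ), c ≠ 0 ∧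
    s = {x : Fin n → ℝ | (∑ i, (c i : ℝ) * x i) < (d : ℝ)}

/-- Membership in the Boolean subalgebra `ROQ(ℝ^n)` of the Boolean algebra of regular open
sets generated by the rational open half-spaces, with Boolean operations
`a·b = a ∩ b`, `a + b = int(cl(a ∪ b))`, `-a = int(ℝ^n ∖ a)`, `0 = ∅`, `1 = univ`. -/
inductive InROQ (n : ℕ) : Set (Fin n → ℝ) → Prop
  | bot : InROQ n ∅
  | top : InROQ n Set.univ
  | halfspace (s : Set (Fin n → ℝ)) : IsRatHalfSpace n s → InROQ n s
  | inf (s t : Set (Fin n → ℝ)) : InROQ n s → InROQ n t → InROQ n (s ∩ t)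
  | sup (s t : Set (Fin n → ℝ)) : InROQ n s → InROQ n t →
      InROQ n (interior (closure (s ∪ t)))
  | compl (s : Set (Fin n → ℝ)) : InROQ n s → InROQ n (interior sᶜ)

/-- `ROQ(ℝ^n)` as a set of subsets of ℝ^n. -/
def ROQ (n : ℕ) : Set (Set (Fin n → ℝ)) := {s | InROQ n s}

/-- The domain of the structure 𝔐^n: the regular open rational polytopes. -/
def ROQel (n : ℕ) : Type := {s : Set (Fin n → ℝ) // InROQ n s}

/-- Relation symbols of the language L_{conv,≤}: one unary (`conv`), one binary (`≤`). -/
def LconvRel : ℕ → Type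
  | 1 => Unit
  | 2 => Unit
  | _ => Empty

/-- The first-order language L_{conv,≤} with no function symbols, a unary relation symbol
`conv` and a binary relation symbol `≤`. -/
def Lconv : Language := ⟨fun _ => Empty, LconvRel⟩

/-- The structure 𝔐^n: domain ROQ(ℝ^n), `≤` interpreted as inclusion and `conv`
as convexity. -/
instance MStructure (n : ℕ) : Lconv.Structure (ROQel n) where
  funMap := fun f _ => f.elim
  RelMap := fun {k} r v =>
    match k, r, v with
    | 1, _, v => Convex ℝ (v 0).1
    | 2, _, v => (v 0).1 ⊆ (v 1).1
    | 0, r, _ => r.elim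
    | (_ + 3), r, _ => r.elim

/-! ### Auxiliary definitions: the Helly sentence -/

/-- The binary relation symbol `≤` of `Lconv`. -/
def leqR : Lconv.Relations 2 := ()

/-- The unary relation symbol `conv` of `Lconv`. -/
def convR : Lconv.Relations 1 := ()

/-- Atomic formula `x ≤ y`. -/
def leqF {α : Type} (x y : α) : Lconv.Formula α :=
  leqR.formula₂ (Language.Term.var x) (Language.Term.var y)

/-- Atomic formula `conv x`. -/
def convF {α : Type} (x : α) : Lconv.Formula α :=
  convR.formula₁ (Language.Term.var x)

/-- Formula expressing that the family `{a i : i ∈ s}` has a common nonzero lower bound. -/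
noncomputable def interF (k : ℕ) (s : Finset (Fin k)) : Lconv.Formula (Fin k) :=
  Language.Formula.iExs (Fin 2)
    ((Language.BoundedFormula.iInf (fun i : s => leqF (Sum.inr 0) (Sum.inl (i : Fin k)))) ⊓
      ∼(leqF (Sum.inr 0) (Sum.inr 1)))

/-- The Helly formula for `k` convex sets. -/
noncomputable def hellyF (k : ℕ) : Lconv.Formula (Fin k) :=
  ((Language.BoundedFormula.iInf (fun i : Fin k => convF i)) ⊓
     (Language.BoundedFormula.iInf
        (fun j : Fin k => interF k (Finset.univ.erase j)))).imp
    (interF k Finset.univ)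

/-- The Helly sentence for `k` convex sets. -/
noncomputable def hellyS (k : ℕ) : Lconv.Sentence :=
  Language.Formula.iAlls (Fin k) ((hellyF k).relabel (Sum.inr : Fin k → Empty ⊕ Fin k))

@[simp] lemma relMap_leq {m : ℕ} (v : Fin 2 → ROQel m) :
    Language.Structure.RelMap (L := Lconv) (M := ROQel m) leqR v ↔ (v 0).1 ⊆ (v 1).1 := Iff.rfl

@[simp] lemma relMap_conv {m : ℕ} (v : Fin 1 → ROQel m) :
    Language.Structure.RelMap (L := Lconv) (M := ROQel m) convR v ↔ Convex ℝ (v 0).1 := Iff.rfl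

lemma realize_hellyS {m k : ℕ} :
    (ROQel m ⊨ hellyS k) ↔
      ∀ a : Fin k → ROQel m,
        (∀ i, Convex ℝ (a i).1) →
        (∀ j : Fin k, ∃ p : Fin 2 → ROQel m,
            (∀ i, ¬ i = j → (p 0).1 ⊆ (a i).1) ∧ ¬ (p 0).1 ⊆ (p 1).1) →
        ∃ p : Fin 2 → ROQel m, (∀ i, (p 0).1 ⊆ (a i).1) ∧ ¬ (p 0).1 ⊆ (p 1).1 := by
  simp only [hellyS, Language.Sentence.Realize, Language.Formula.realize_iAlls,
    Language.Formula.realize_relabel, Function.comp_def, Sum.elim_inr]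
  simp [hellyS, hellyF, interF, leqF, convF, Language.Sentence.Realize,
    Language.Formula.Realize, Language.Relations.formula₂, Language.Relations.formula₁,
    Language.BoundedFormula.realize_rel,
    Language.Relations.formula, Language.Term.realize_relabel,
    Matrix.cons_val_zero, Matrix.cons_val_one, Matrix.head_cons,
    Language.Term.realize]

/-- Finite intersections of `InROQ` sets are `InROQ`. -/
lemma InROQ.biInter {m k : ℕ} {F : Fin k → Set (Fin m → ℝ)} (hF : ∀ i, InROQ m (F i))
    (s : Finset (Fin k)) : InROQ m (⋂ i ∈ s, F i) := by
  classical
  induction s using Finset.induction with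
  | empty => simpa using InROQ.top
  | @insert a s ha ih =>
      rw [Finset.set_biInter_insert]
      exact InROQ.inf _ _ (hF a) ih

/-- Helly's theorem specialised to `n+2` convex subsets of `ℝ^n`. -/
lemma helly_app {n : ℕ} (F : Fin (n + 2) → Set (Fin n → ℝ))
    (hconv : ∀ i, Convex ℝ (F i))
    (hint : ∀ j, (⋂ i ∈ Finset.univ.erase j, F i).Nonempty) :
    (⋂ i ∈ (Finset.univ : Finset (Fin (n + 2))), F i).Nonempty := by
  classical
  apply Convex.helly_theorem' (𝕜 := ℝ) (fun i _ => hconv i)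
  intro I _ hIcard
  rw [Module.finrank_fin_fun] at hIcard
  have hIne : I ≠ Finset.univ := by
    intro h
    rw [h, Finset.card_univ, Fintype.card_fin] at hIcard
    omega
  obtain ⟨j, -, hj⟩ := Finset.exists_of_ssubset (lt_of_le_of_ne (Finset.subset_univ I) hIne)
  refine (hint j).mono (Set.biInter_subset_biInter_left ?_)
  intro i hi
  exact Finset.mem_erase.2 ⟨fun h => hj (h ▸ hi), Finset.mem_univ i⟩

/-! ### The counterexample in ℝ^{n+1} -/

/-- The `n+2` open half-spaces cutting out a simplex in `ℝ^{n+1}`. -/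
def hsSet (n : ℕ) (j : Fin (n + 2)) : Set (Fin (n + 1) → ℝ) :=
  if h : (j : ℕ) < n + 1 then {x | x ⟨j, h⟩ < 0} else {x | 1 < ∑ i, x i}

lemma hsSet_ratHalfSpace (n : ℕ) (j : Fin (n + 2)) : IsRatHalfSpace (n + 1) (hsSet n j) := by
  unfold hsSet
  split
  · next h =>
    refine ⟨fun i => if i = ⟨j, h⟩ then 1 else 0, 0, ?_, ?_⟩
    · intro hc
      have := congrFun hc ⟨j, h⟩
      simp at this
    · ext x
      simp [Finset.sum_ite_eq', apply_ite (fun q : ℚ => (q : ℝ))]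
  · refine ⟨fun _ => -1, -1, ?_, ?_⟩
    · intro hc
      have := congrFun hc 0
      simp at this
    · ext x
      have : ∑ i, (((-1 : ℚ) : ℝ)) * x i = -∑ i, x i := by
        simp [neg_mul, Finset.sum_neg_distrib]
      simp only [Set.mem_setOf_eq, this]
      push_cast
      constructor <;> intro <;> linarith

lemma hsSet_convex (n : ℕ) (j : Fin (n + 2)) : Convex ℝ (hsSet n j) := by
  unfold hsSet
  split
  · exact convex_halfSpace_lt ⟨fun _ _ => rfl, fun _ _ => rfl⟩ 0
  · exact convex_halfSpace_gt
      ⟨fun x y => Finset.sum_add_distrib, fun c x => by simp [Finset.mul_sum]⟩ 1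

/-- The witness point avoiding constraint `j`. -/
def hsPt (n : ℕ) (j : Fin (n + 2)) : Fin (n + 1) → ℝ :=
  fun i => if (i : ℕ) = (j : ℕ) then (n + 2 : ℝ) else -1

lemma hsPt_mem (n : ℕ) (j i : Fin (n + 2)) (hij : i ≠ j) : hsPt n j ∈ hsSet n i := by
  unfold hsSet hsPt
  split
  · next h =>
    have : ((⟨(i : ℕ), h⟩ : Fin (n + 1)) : ℕ) ≠ (j : ℕ) := by
      simpa [Fin.ext_iff] using hij
    simp [this]
  · next h =>
    -- here (i : ℕ) = n + 1 and hence (j : ℕ) < n + 1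
    have hi : (i : ℕ) = n + 1 := by omega
    have hj : (j : ℕ) < n + 1 := by
      rcases lt_or_ge (j : ℕ) (n + 1) with hj | hj
      · exact hj
      · exfalso; apply hij; apply Fin.ext; omega
    set j0 : Fin (n + 1) := ⟨(j : ℕ), hj⟩
    have hsum : ∑ i', (if ((i' : Fin (n+1)) : ℕ) = (j : ℕ) then (n + 2 : ℝ) else -1)
        = ∑ i' : Fin (n+1), ((if i' = j0 then (n + 3 : ℝ) else 0) + (-1)) := by
      apply Finset.sum_congr rfl
      intro i' _
      by_cases h' : i' = j0
      · have : ((i' : Fin (n+1)) : ℕ) = (j : ℕ) := by rw [h']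
        rw [if_pos this, if_pos h']; ring
      · have : ¬ ((i' : Fin (n+1)) : ℕ) = (j : ℕ) := by
          intro hh; apply h'; exact Fin.ext hh
        rw [if_neg this, if_neg h']; ring
    simp only [Set.mem_setOf_eq]
    rw [hsum, Finset.sum_add_distrib]
    rw [Finset.sum_ite_eq' Finset.univ j0 (fun _ => (n + 3 : ℝ))]
    simp
    linarith

lemma hsSet_empty_inter (n : ℕ) (x : Fin (n + 1) → ℝ) :
    ¬ ∀ j : Fin (n + 2), x ∈ hsSet n j := by
  intro hx
  have hlast := hx ⟨n + 1, by omega⟩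
  have hcoord : ∀ i : Fin (n + 1), x i < 0 := by
    intro i
    have := hx ⟨(i : ℕ), by omega⟩
    unfold hsSet at this
    rw [dif_pos (by simpa using i.2)] at this
    simpa using this
  unfold hsSet at hlast
  rw [dif_neg (by simp)] at hlast
  simp only [Set.mem_setOf_eq] at hlast
  have : ∑ i, x i ≤ 0 := Finset.sum_nonpos (fun i _ => (hcoord i).le)
  linarith

/-! ### Main theorem -/

/-- For every n ≥ 1 there is an L_{conv,≤}-sentence true in 𝔐^n but false in 𝔐^{n+1};
consequently the theories of 𝔐^n and 𝔐^{n+1} differ. -/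
theorem theories_differ (n : ℕ) (hn : 1 ≤ n) :
    (∃ σ : Lconv.Sentence, (ROQel n ⊨ σ) ∧ ¬ (ROQel (n + 1) ⊨ σ)) ∧
      Lconv.completeTheory (ROQel n) ≠ Lconv.completeTheory (ROQel (n + 1)) := by
  classical
  have htrue : ROQel n ⊨ hellyS (n + 2) := by
    rw [realize_hellyS]
    intro a hconv hint
    -- from the hypothesis, each (n+1)-subfamily has nonempty intersection
    have hne : ∀ j, (⋂ i ∈ Finset.univ.erase j, (a i).1).Nonempty := by
      intro j
      obtain ⟨p, hp, hpw⟩ := hint j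
      obtain ⟨x, hx, -⟩ := Set.not_subset.1 hpw
      exact ⟨x, Set.mem_biInter fun i hi => hp i (Finset.mem_erase.1 hi).1 hx⟩
    have hfull := helly_app (fun i => (a i).1) hconv hne
    refine ⟨![⟨⋂ i ∈ (Finset.univ : Finset (Fin (n+2))), (a i).1,
        InROQ.biInter (fun i => (a i).2) _⟩, ⟨∅, InROQ.bot⟩], ?_, ?_⟩
    · intro i
      exact Set.biInter_subset_of_mem (Finset.mem_univ i)
    · show ¬ _ ⊆ (∅ : Set (Fin _ → ℝ))
      rw [Set.subset_empty_iff]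
      exact hfull.ne_empty
  have hfalse : ¬ (ROQel (n + 1) ⊨ hellyS (n + 2)) := by
    rw [realize_hellyS]
    intro h
    set a : Fin (n + 2) → ROQel (n + 1) :=
      fun j => ⟨hsSet n j, InROQ.halfspace _ (hsSet_ratHalfSpace n j)⟩ with ha
    have hint : ∀ j : Fin (n + 2), ∃ p : Fin 2 → ROQel (n + 1),
        (∀ i, ¬ i = j → (p 0).1 ⊆ (a i).1) ∧ ¬ (p 0).1 ⊆ (p 1).1 := by
      intro j
      refine ⟨![⟨⋂ i ∈ Finset.univ.erase j, hsSet n i,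
          InROQ.biInter (fun i => InROQ.halfspace _ (hsSet_ratHalfSpace n i)) _⟩,
          ⟨∅, InROQ.bot⟩], ?_, ?_⟩
      · intro i hij
        exact Set.biInter_subset_of_mem (Finset.mem_erase.2 ⟨hij, Finset.mem_univ i⟩)
      · show ¬ _ ⊆ (∅ : Set (Fin _ → ℝ))
        rw [Set.subset_empty_iff]
        apply Set.Nonempty.ne_empty
        exact ⟨hsPt n j, Set.mem_biInter fun i hi => hsPt_mem n j i (Finset.mem_erase.1 hi).1⟩
    obtain ⟨p, hp, hpw⟩ := h a (fun i => hsSet_convex n i) hint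
    obtain ⟨x, hx, -⟩ := Set.not_subset.1 hpw
    exact hsSet_empty_inter n x (fun j => hp j hx)
  refine ⟨⟨hellyS (n + 2), htrue, hfalse⟩, ?_⟩
  intro h
  apply hfalse
  rw [← Language.mem_completeTheory, ← h, Language.mem_completeTheory]
  exact htrue
end

section
/- For every n ≥ 1 there exist n+2 rational open half-spaces h_1, …, h_{n+2} in ℝ^{n+1} such that every (n+1)-element subfamily of {h_1, …, h_{n+2}} has nonempty intersection, but h_1 ∩ … ∩ h_{n+2} = ∅. (This witnesses the failure in 𝔐^{n+1} of the Helly sentence that holds in 𝔐^n.) -/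
open FirstOrder

/-- The coefficient vectors: for `i < n+1`, the negative of the `i`-th standard basis
vector (giving `x_i > 0`); for `i = n+1`, the all-ones vector (giving `∑ x_j < 0`). -/
def hellyCoef (n : ℕ) (i : Fin (n + 2)) : Fin (n + 1) → ℚ :=
  fun j => if (i : ℕ) = n + 1 then 1 else if (j : ℕ) = (i : ℕ) then -1 else 0

lemma hellyCoef_sum_lt (n : ℕ) (i : Fin (n + 2)) (hi : (i : ℕ) < n + 1)
    (x : Fin (n + 1) → ℝ) :
    (∑ j, ((hellyCoef n i j : ℝ)) * x j) = -x ⟨(i : ℕ), hi⟩ := by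
  have hine : (i : ℕ) ≠ n + 1 := Nat.ne_of_lt hi
  rw [Finset.sum_eq_single ⟨(i : ℕ), hi⟩]
  · simp [hellyCoef, hine]
  · intro b _ hb
    have : (b : ℕ) ≠ (i : ℕ) := fun h => hb (Fin.ext h)
    simp [hellyCoef, hine, this]
  · simp

lemma hellyCoef_sum_last (n : ℕ) (i : Fin (n + 2)) (hi : (i : ℕ) = n + 1)
    (x : Fin (n + 1) → ℝ) :
    (∑ j, ((hellyCoef n i j : ℝ)) * x j) = ∑ j, x j := by
  simp [hellyCoef, hi]

/-- Failure of the (n+1)-ary Helly property in dimension n+1: there are n+2 rational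
open half-spaces in ℝ^{n+1} such that every (n+1)-element subfamily has nonempty
intersection but the whole family has empty intersection. -/
theorem helly_fails_in_higher_dimension (n : ℕ) (hn : 1 ≤ n) :
    ∃ h : Fin (n + 2) → Set (Fin (n + 1) → ℝ),
      (∀ i, IsRatHalfSpace (n + 1) (h i)) ∧
      (∀ I : Finset (Fin (n + 2)), I.card = n + 1 → (⋂ i ∈ I, h i).Nonempty) ∧
      (⋂ i, h i) = ∅ := by
  classical
  refine ⟨fun i => {x | (∑ j, ((hellyCoef n i j : ℝ)) * x j) < 0}, ?_, ?_, ?_⟩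
  · intro i
    refine ⟨hellyCoef n i, 0, ?_, by simp⟩
    by_cases hi : (i : ℕ) = n + 1
    · intro h
      have := congrFun h ⟨0, Nat.succ_pos n⟩
      simp [hellyCoef, hi] at this
    · have hi' : (i : ℕ) < n + 1 := lt_of_le_of_ne (Nat.lt_succ_iff.mp i.isLt) hi
      intro h
      have := congrFun h ⟨(i : ℕ), hi'⟩
      simp [hellyCoef, hi] at this
  · intro I hI
    have hne : I ≠ Finset.univ := by
      intro h
      rw [h, Finset.card_univ] at hI
      simp at hI
    obtain ⟨j, hj⟩ : ∃ j, j ∉ I := by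
      by_contra h
      push_neg at h
      exact hne (Finset.eq_univ_iff_forall.mpr h)
    by_cases hjl : (j : ℕ) = n + 1
    ·
      refine ⟨fun _ => 1, ?_⟩
      simp only [Set.mem_iInter]
      intro i hiI
      have hil : (i : ℕ) < n + 1 := by
        rcases lt_or_eq_of_le (Nat.lt_succ_iff.mp i.isLt) with h | h
        · exact h
        · exact absurd (Fin.ext (h.trans hjl.symm) : i = j) (fun e => hj (e ▸ hiI))
      show (∑ k, ((hellyCoef n i k : ℝ)) * 1) < 0
      rw [hellyCoef_sum_lt n i hil]
      norm_num
    · have hjl' : (j : ℕ) < n + 1 := lt_of_le_of_ne (Nat.lt_succ_iff.mp j.isLt) hjl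
      refine ⟨fun k => if (k : ℕ) = (j : ℕ) then -(n + 2 : ℝ) else 1, ?_⟩
      simp only [Set.mem_iInter]
      intro i hiI
      by_cases hil : (i : ℕ) = n + 1
      · show (∑ k, ((hellyCoef n i k : ℝ)) * _) < 0
        rw [hellyCoef_sum_last n i hil]
        have key : (∑ k : Fin (n+1), if (k:ℕ) = (j:ℕ) then -(n+2:ℝ) else 1)
            = -(n+2) + n := by
          rw [← Finset.add_sum_erase _ _
            (Finset.mem_univ (⟨(j:ℕ), hjl'⟩ : Fin (n+1)))]
          congr 1
          · simp
          · rw [Finset.sum_congr rfl (fun k hk => if_neg ?_), Finset.sum_const,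
              Finset.card_erase_of_mem (Finset.mem_univ _), Finset.card_univ]
            · simp
            · intro he
              exact (Finset.mem_erase.mp hk).1 (Fin.ext he)
        rw [key]
        have : (0:ℝ) ≤ n := Nat.cast_nonneg n
        linarith
      · have hil' : (i : ℕ) < n + 1 := lt_of_le_of_ne (Nat.lt_succ_iff.mp i.isLt) hil
        show (∑ k, ((hellyCoef n i k : ℝ)) * _) < 0
        rw [hellyCoef_sum_lt n i hil']
        have : (i : ℕ) ≠ (j : ℕ) := fun e => hj ((Fin.ext e : i = j) ▸ hiI)
        simp [this]
  · ext x
    simp only [Set.mem_iInter, Set.mem_empty_iff_false, iff_false]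
    intro hx
    have hsum : (∑ j, x j) < 0 := by
      have := hx (Fin.last (n + 1))
      simp only [Set.mem_setOf_eq] at this
      rwa [hellyCoef_sum_last n _ (Fin.val_last _) x] at this
    have hpos : ∀ k : Fin (n + 1), 0 < x k := by
      intro k
      have := hx ⟨(k : ℕ), k.isLt.trans (Nat.lt_succ_self _)⟩
      simp only [Set.mem_setOf_eq] at this
      rw [hellyCoef_sum_lt n _ k.isLt x] at this
      linarith
    have : 0 < ∑ j, x j := Finset.sum_pos (fun k _ => hpos k) Finset.univ_nonempty
    linarith
end

section
/- Let n ≥ 1 and let a ∈ ROQ(ℝ^n) with a ≠ ∅ and a ≠ ℝ^n. Then both a and its regular-open complement int(ℝ^n ∖ a) are convex if and only if a is a rational open half-space, i.e. a = {x ∈ ℝ^n : c·x < d} for some nonzero c ∈ ℚ^n and d ∈ ℚ. -/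
open FirstOrder

section Aux

open Set

variable {n : ℕ}

noncomputable def ratLin (n : ℕ) (c : Fin n → ℚ) : (Fin n → ℝ) →L[ℝ] ℝ :=
  ∑ i, (c i : ℝ) • (ContinuousLinearMap.proj i : (Fin n → ℝ) →L[ℝ] ℝ)

lemma ratLin_apply (c : Fin n → ℚ) (x : Fin n → ℝ) :
    ratLin n c x = ∑ i, (c i : ℝ) * x i := by
  simp [ratLin, smul_eq_mul]

lemma ratLin_ne_zero {c : Fin n → ℚ} (hc : c ≠ 0) : ratLin n c ≠ 0 := by
  obtain ⟨i, hi⟩ := Function.ne_iff.1 hc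
  intro h
  have h1 : ratLin n c (Pi.single i (1:ℝ)) = c i := by
    rw [ratLin_apply, Finset.sum_eq_single i]
    · simp
    · intro j _ hj; simp [Pi.single_eq_of_ne hj]
    · simp
  rw [h] at h1
  simp at h1
  exact hi (by exact_mod_cast h1.symm)

lemma halfspace_set_eq (c : Fin n → ℚ) (d : ℚ) :
    {x : Fin n → ℝ | (∑ i, (c i : ℝ) * x i) < (d : ℝ)} = ratLin n c ⁻¹' Iio (d : ℝ) := by
  ext x; simp [ratLin_apply]

lemma regular_interior_closure (u : Set (Fin n → ℝ)) :
    interior (closure (interior (closure u))) = interior (closure u) := by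
  apply subset_antisymm
  · have : closure (interior (closure u)) ⊆ closure u := by
      simpa using closure_mono (interior_subset (s := closure u))
    exact interior_mono this
  · exact interior_maximal subset_closure isOpen_interior

lemma InROQ.isOpen_and_regular {s : Set (Fin n → ℝ)} (h : InROQ n s) :
    IsOpen s ∧ interior (closure s) = s := by
  induction h with
  | bot => simp
  | top => simp
  | halfspace s hs =>
    obtain ⟨c, d, hc, rfl⟩ := hs
    rw [halfspace_set_eq]
    have hf := (ratLin n c).continuous
    have hom : IsOpenMap (ratLin n c) := (ratLin n c).isOpenMap_of_ne_zero (ratLin_ne_zero hc)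
    constructor
    · exact isOpen_Iio.preimage hf
    · rw [← hom.preimage_closure_eq_closure_preimage hf, closure_Iio,
        ← hom.preimage_interior_eq_interior_preimage hf, interior_Iic]
  | inf s t hs ht ihs iht =>
    refine ⟨ihs.1.inter iht.1, subset_antisymm ?_ (interior_maximal subset_closure (ihs.1.inter iht.1))⟩
    intro x hx
    constructor
    · rw [← ihs.2]; exact interior_mono (closure_mono inter_subset_left) hx
    · rw [← iht.2]; exact interior_mono (closure_mono inter_subset_right) hx
  | sup s t hs ht ihs iht => exact ⟨isOpen_interior, regular_interior_closure _⟩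
  | compl s hs ihs =>
    refine ⟨isOpen_interior, subset_antisymm ?_ (interior_maximal subset_closure isOpen_interior)⟩
    have h1 : closure (interior sᶜ) ⊆ sᶜ :=
      (closure_mono interior_subset).trans ihs.1.isClosed_compl.closure_eq.subset
    exact interior_mono h1

lemma InROQ.frontier_cover {s : Set (Fin n → ℝ)} (h : InROQ n s) :
    ∃ I : Finset ((Fin n → ℚ) × ℚ), (∀ p ∈ I, p.1 ≠ 0) ∧
      frontier s ⊆ ⋃ p ∈ I, {x | ratLin n p.1 x = (p.2 : ℝ)} := by
  induction h with
  | bot => exact ⟨∅, by simp, by simp⟩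
  | top => exact ⟨∅, by simp, by simp⟩
  | halfspace s hs =>
    obtain ⟨c, d, hc, rfl⟩ := hs
    refine ⟨{(c, d)}, by simpa using hc, ?_⟩
    rw [halfspace_set_eq]
    have hom : IsOpenMap (ratLin n c) := (ratLin n c).isOpenMap_of_ne_zero (ratLin_ne_zero hc)
    rw [← hom.preimage_frontier_eq_frontier_preimage (ratLin n c).continuous, frontier_Iio]
    intro x hx
    simp only [Finset.mem_singleton, mem_iUnion]
    exact ⟨(c, d), rfl, hx⟩
  | inf s t hs ht ihs iht =>
    obtain ⟨I₁, hI₁, hc₁⟩ := ihs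
    obtain ⟨I₂, hI₂, hc₂⟩ := iht
    refine ⟨I₁ ∪ I₂, ?_, ?_⟩
    · intro p hp; rcases Finset.mem_union.1 hp with h' | h'
      · exact hI₁ p h'
      · exact hI₂ p h'
    · intro x hx
      have : x ∈ frontier s ∪ frontier t := by
        rcases frontier_inter_subset s t hx with h' | h'
        · exact Or.inl h'.1
        · exact Or.inr h'.2
      rcases this with h' | h'
      · obtain ⟨p, hp, hxp⟩ := mem_iUnion₂.1 (hc₁ h')
        exact mem_iUnion₂.2 ⟨p, Finset.mem_union_left _ hp, hxp⟩
      · obtain ⟨p, hp, hxp⟩ := mem_iUnion₂.1 (hc₂ h')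
        exact mem_iUnion₂.2 ⟨p, Finset.mem_union_right _ hp, hxp⟩
  | sup s t hs ht ihs iht =>
    obtain ⟨I₁, hI₁, hc₁⟩ := ihs
    obtain ⟨I₂, hI₂, hc₂⟩ := iht
    refine ⟨I₁ ∪ I₂, ?_, ?_⟩
    · intro p hp; rcases Finset.mem_union.1 hp with h' | h'
      · exact hI₁ p h'
      · exact hI₂ p h'
    · intro x hx
      have hx2 : x ∈ frontier (s ∪ t) :=
        frontier_closure_subset (frontier_interior_subset hx)
      rcases frontier_union_subset s t hx2 with h' | h'
      · obtain ⟨p, hp, hxp⟩ := mem_iUnion₂.1 (hc₁ h'.1)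
        exact mem_iUnion₂.2 ⟨p, Finset.mem_union_left _ hp, hxp⟩
      · obtain ⟨p, hp, hxp⟩ := mem_iUnion₂.1 (hc₂ h'.2)
        exact mem_iUnion₂.2 ⟨p, Finset.mem_union_right _ hp, hxp⟩
  | compl s hs ihs =>
    obtain ⟨I, hI, hc⟩ := ihs
    refine ⟨I, hI, fun x hx => ?_⟩
    have : x ∈ frontier s := by
      rw [← frontier_compl]
      exact frontier_interior_subset hx
    exact hc this

end Aux

set_option maxHeartbeats 1000000 in
/-- A nontrivial region of ROQ(ℝ^n) is a rational open half-space if and only if both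
it and its regular-open complement int(ℝ^n ∖ a) are convex. -/
theorem halfspace_iff_convex_with_convex_complement (n : ℕ) (hn : 1 ≤ n)
    (a : Set (Fin n → ℝ)) (ha : a ∈ ROQ n) (hbot : a ≠ ∅) (htop : a ≠ Set.univ) :
    (Convex ℝ a ∧ Convex ℝ (interior aᶜ)) ↔ IsRatHalfSpace n a := by
  have ha' : InROQ n a := ha
  obtain ⟨hao, hreg⟩ := ha'.isOpen_and_regular
  constructor
  · rintro ⟨hconva, hconvb⟩
    classical
    set b := interior aᶜ with hb
    have hclA : closure a = bᶜ := by rw [hb, closure_eq_compl_interior_compl]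
    have hbne : b.Nonempty := by
      rcases b.eq_empty_or_nonempty with h | h
      · exfalso; apply htop
        have h2 : closure a = Set.univ := by rw [hclA, h, Set.compl_empty]
        rw [← hreg, h2, interior_univ]
      · exact h
    have hane : a.Nonempty := Set.nonempty_iff_ne_empty.2 hbot
    have hdisj : Disjoint a b := by
      rw [Set.disjoint_left]; intro x hx hxb
      exact (interior_subset hxb) hx
    obtain ⟨f, u, hfa, hfb⟩ :=
      geometric_hahn_banach_open_open hconva hao hconvb isOpen_interior hdisj
    have hf : f ≠ 0 := by
      rintro rfl
      obtain ⟨x, hx⟩ := hane; obtain ⟨y, hy⟩ := hbne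
      have h1 := hfa x hx; have h2 := hfb y hy
      simp only [ContinuousLinearMap.zero_apply] at h1 h2
      linarith
    have haeq : a = f ⁻¹' Set.Iio u := by
      apply subset_antisymm
      · exact fun x hx => hfa x hx
      · have h1 : f ⁻¹' Set.Iio u ⊆ bᶜ := by
          intro x hx hxb
          exact absurd (hfb x hxb) (not_lt.2 (le_of_lt hx))
        have h2 : f ⁻¹' Set.Iio u ⊆ interior bᶜ :=
          interior_maximal h1 (isOpen_Iio.preimage f.continuous)
        rwa [← hclA, hreg] at h2
    have hom : IsOpenMap f := f.isOpenMap_of_ne_zero hf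
    have hfront : frontier a = f ⁻¹' {u} := by
      rw [haeq, ← hom.preimage_frontier_eq_frontier_preimage f.continuous, frontier_Iio]
    obtain ⟨I, hI0, hIcov⟩ := ha'.frontier_cover
    rw [hfront] at hIcov
    obtain ⟨v₁, hv₁⟩ := ContinuousLinearMap.exists_ne_zero hf
    set H : Set (Fin n → ℝ) := f ⁻¹' {u} with hH
    have hHne : H.Nonempty := ⟨(u / f v₁) • v₁, by
      simp [hH, Set.mem_preimage, div_mul_cancel₀ u hv₁]⟩
    have hHcl : IsClosed H := isClosed_singleton.preimage f.continuous
    haveI : Nonempty H := hHne.to_subtype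
    haveI : CompleteSpace H := hHcl.completeSpace_coe
    have hclosed : ∀ p : I, IsClosed {y : H | ratLin n p.1.1 y.val = (p.1.2 : ℝ)} :=
      fun p => isClosed_eq ((ratLin n p.1.1).continuous.comp continuous_subtype_val)
        continuous_const
    have hcov' : ⋃ p : I, {y : H | ratLin n p.1.1 y.val = (p.1.2 : ℝ)} = Set.univ := by
      ext y
      simp only [Set.mem_iUnion, Set.mem_univ, iff_true]
      obtain ⟨p, hp, hyp⟩ := Set.mem_iUnion₂.1 (hIcov y.2)
      exact ⟨⟨p, hp⟩, hyp⟩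
    obtain ⟨p, x, hx⟩ := nonempty_interior_of_iUnion_of_closed hclosed hcov'
    set g : (Fin n → ℝ) →L[ℝ] ℝ := ratLin n p.1.1 with hg
    set d : ℝ := (p.1.2 : ℝ) with hd
    have hgne : g ≠ 0 := ratLin_ne_zero (hI0 p.1 p.2)
    have hSnhds : {y : H | g y.val = d} ∈ nhds x := mem_interior_iff_mem_nhds.1 hx
    rw [nhds_subtype_eq_comap] at hSnhds
    obtain ⟨W, hW, hWS⟩ := Filter.mem_comap.1 hSnhds
    have hgx0 : g x.val = d := hWS (Set.mem_preimage.mpr (mem_of_mem_nhds hW))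
    have hfx0 : f x.val = u := Set.mem_singleton_iff.1 x.2
    obtain ⟨ε, hε, hball⟩ := Metric.mem_nhds_iff.1 hW
    have hker : ∀ v, f v = 0 → g v = 0 := by
      intro v hv
      rcases eq_or_ne v 0 with rfl | hv0
      · simp
      set t : ℝ := ε / (2 * ‖v‖) with ht'
      have hvn : (0:ℝ) < ‖v‖ := norm_pos_iff.2 hv0
      have ht : 0 < t := div_pos hε (by positivity)
      have hyH : x.val + t • v ∈ H := by
        show f (x.val + t • v) ∈ ({u} : Set ℝ)
        rw [map_add, map_smul, hv, hfx0]
        simp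
      have hdist : dist (x.val + t • v) x.val < ε := by
        rw [dist_eq_norm, add_sub_cancel_left, norm_smul, Real.norm_eq_abs, abs_of_pos ht]
        have : t * ‖v‖ = ε / 2 := by
          rw [ht']; field_simp
        rw [this]; linarith
      have hmem : (⟨x.val + t • v, hyH⟩ : H) ∈ Subtype.val ⁻¹' W :=
        hball (Metric.mem_ball.2 hdist)
      have hgy : g (x.val + t • v) = d := hWS hmem
      rw [map_add, map_smul, hgx0, smul_eq_mul] at hgy
      have h0 : t * g v = 0 := by linarith
      rcases mul_eq_zero.1 h0 with h | h
      · exact absurd h (ne_of_gt ht)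
      · exact h
    set e : Fin n → ℝ := (f v₁)⁻¹ • v₁ with he
    have hfe : f e = 1 := by rw [he, map_smul, smul_eq_mul, inv_mul_cancel₀ hv₁]
    have hlin : ∀ z, g z = f z * g e := by
      intro z
      have h0 : f (z - f z • e) = 0 := by
        rw [map_sub, map_smul, hfe, smul_eq_mul, mul_one, sub_self]
      have h1 := hker _ h0
      rw [map_sub, map_smul, smul_eq_mul, sub_eq_zero] at h1
      exact h1
    have hge : g e ≠ 0 := by
      intro h0
      apply hgne
      ext z
      simp [hlin z, h0]
    have hdu : d = u * g e := by rw [← hgx0, hlin x.val, hfx0]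
    rcases lt_or_gt_of_ne hge with hneg | hpos
    · refine ⟨-p.1.1, -p.1.2, neg_ne_zero.2 (hI0 p.1 p.2), ?_⟩
      rw [haeq, halfspace_set_eq]
      have hratneg : ratLin n (-p.1.1) = -g := by
        ext z
        rw [ContinuousLinearMap.neg_apply, hg, ratLin_apply, ratLin_apply,
          ← Finset.sum_neg_distrib]
        refine Finset.sum_congr rfl fun i _ => ?_
        rw [Pi.neg_apply]
        push_cast
        ring
      rw [hratneg]
      ext z
      simp only [Set.mem_preimage, Set.mem_Iio, ContinuousLinearMap.neg_apply, Rat.cast_neg]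
      rw [hlin z, show ((p.1.2 : ℚ) : ℝ) = u * g e from hdu, neg_lt_neg_iff]
      exact (mul_lt_mul_right_of_neg hneg).symm
    · refine ⟨p.1.1, p.1.2, hI0 p.1 p.2, ?_⟩
      rw [haeq, halfspace_set_eq]
      ext z
      simp only [Set.mem_preimage, Set.mem_Iio, ← hg, ← hd]
      rw [hlin z, hdu]
      exact (mul_lt_mul_iff_of_pos_right hpos).symm
  · rintro ⟨c, d, hc, rfl⟩
    have hfne := ratLin_ne_zero hc
    have hom := (ratLin n c).isOpenMap_of_ne_zero hfne
    constructor
    · have : {x : Fin n → ℝ | (∑ i, (c i : ℝ) * x i) < (d:ℝ)}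
          = {w : Fin n → ℝ | ratLin n c w < (d:ℝ)} := by
        ext x; simp [ratLin_apply]
      rw [this]
      exact convex_halfSpace_lt ⟨(ratLin n c).map_add, (ratLin n c).map_smul⟩ (d:ℝ)
    · have hcompl : {x : Fin n → ℝ | (∑ i, (c i : ℝ) * x i) < (d:ℝ)}ᶜ
          = ratLin n c ⁻¹' Set.Ici (d:ℝ) := by
        ext x; simp [ratLin_apply, not_lt]
      rw [hcompl, ← hom.preimage_interior_eq_interior_preimage (ratLin n c).continuous,
        interior_Ici]
      have : ratLin n c ⁻¹' Set.Ioi (d:ℝ) = {w : Fin n → ℝ | (d:ℝ) < ratLin n c w} := rfl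
      rw [this]
      exact convex_halfSpace_gt ⟨(ratLin n c).map_add, (ratLin n c).map_smul⟩ (d:ℝ)
end

section
/- Let h_i = {x ∈ ℝ³ : u_i·x < d_i} (i = 1, 2, 3) be open half-spaces in ℝ³ whose normal vectors u_1, u_2, u_3 are pairwise linearly independent (so each pair of bounding planes meets in a line). Then all eight sets ε_1h_1 ∩ ε_2h_2 ∩ ε_3h_3, where each ε_ih_i is either h_i or its opposite open half-space -h_i = int(ℝ³ ∖ h_i), are nonempty if and only if u_1, u_2, u_3 are linearly independent (equivalently, the three bounding planes meet in a single point, forming a corner). -/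
open Finset

lemma interior_compl_halfspace (a : Fin 3 → ℝ) (ha : a ≠ 0) (d : ℝ) :
    interior {x : Fin 3 → ℝ | (∑ k, a k * x k) < d}ᶜ
      = {x : Fin 3 → ℝ | d < ∑ k, a k * x k} := by
  set f : (Fin 3 → ℝ) →L[ℝ] ℝ := ∑ k, a k • ContinuousLinearMap.proj k with hf
  have hfapp : ∀ x, f x = ∑ k, a k * x k := by
    intro x
    simp [hf, ContinuousLinearMap.sum_apply]
  obtain ⟨k0, hk0⟩ := Function.ne_iff.mp ha
  rw [Pi.zero_apply] at hk0
  have hsurj : Function.Surjective f := by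
    intro r
    refine ⟨fun k => if k = k0 then r / a k0 else 0, ?_⟩
    rw [hfapp]
    rw [Finset.sum_eq_single k0]
    · simp; field_simp
    · intro b _ hb; simp [hb]
    · simp
  have h1 : {x : Fin 3 → ℝ | (∑ k, a k * x k) < d}ᶜ = f ⁻¹' (Set.Ici d) := by
    ext x; simp [hfapp, not_lt]
  rw [h1, f.interior_preimage hsurj, interior_Ici]
  ext x; simp [hfapp]

/-- Three open half-spaces in ℝ³ whose normal vectors are pairwise linearly independent
form a corner (all eight octant intersections nonempty) if and only if the three normal
vectors are linearly independent. -/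
theorem corner_iff_linearIndependent
    (u : Fin 3 → (Fin 3 → ℝ)) (d : Fin 3 → ℝ)
    (hpair : ∀ i j : Fin 3, i ≠ j → LinearIndependent ℝ ![u i, u j])
    (h : Fin 3 → Set (Fin 3 → ℝ))
    (hh : ∀ i, h i = {x : Fin 3 → ℝ | (∑ k, u i k * x k) < d i}) :
    (∀ ε : Fin 3 → Bool,
        (⋂ i, if ε i then h i else interior (h i)ᶜ).Nonempty) ↔
      LinearIndependent ℝ u := by
  have hune : ∀ i : Fin 3, u i ≠ 0 := by
    intro i
    have hex : ∃ j : Fin 3, i ≠ j := by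
      fin_cases i
      · exact ⟨1, by decide⟩
      · exact ⟨0, by decide⟩
      · exact ⟨0, by decide⟩
    obtain ⟨j, hij⟩ := hex
    have := (hpair i j hij).ne_zero 0
    simpa using this
  have hmem : ∀ (ε : Fin 3 → Bool) (i : Fin 3) (x : Fin 3 → ℝ),
      x ∈ (if ε i then h i else interior (h i)ᶜ) ↔
        (if ε i then (∑ k, u i k * x k) < d i else d i < ∑ k, u i k * x k) := by
    intro ε i x
    cases hε : ε i
    · rw [if_neg (by simp), if_neg (by simp), hh i,
        interior_compl_halfspace (u i) (hune i) (d i)]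
      rfl
    · rw [if_pos rfl, if_pos rfl, hh i]; rfl
  constructor
  · intro hall
    by_contra hli
    obtain ⟨c, hsum, i0, hc0⟩ := Fintype.not_linearIndependent_iff.mp hli
    have hcne : ∀ i, c i ≠ 0 := by
      intro i hci
      have hz : ∀ j, c j = 0 := by
        have hsum3 := hsum
        rw [Fin.sum_univ_three] at hsum3
        intro j
        fin_cases i
        · have h0 : c 0 = 0 := hci
          rw [h0, zero_smul, zero_add] at hsum3
          have := (hpair 1 2 (by decide)).eq_zero_of_pair hsum3
          fin_cases j
          · exact h0
          · exact this.1
          · exact this.2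
        · have h1 : c 1 = 0 := hci
          rw [h1, zero_smul, add_zero] at hsum3
          have := (hpair 0 2 (by decide)).eq_zero_of_pair hsum3
          fin_cases j
          · exact this.1
          · exact h1
          · exact this.2
        · have h2 : c 2 = 0 := hci
          rw [h2, zero_smul, add_zero] at hsum3
          have := (hpair 0 1 (by decide)).eq_zero_of_pair hsum3
          fin_cases j
          · exact this.1
          · exact this.2
          · exact h2
      exact hc0 (hz i0)
    have hkey : ∀ x : Fin 3 → ℝ, ∑ i, c i * (∑ k, u i k * x k) = 0 := by
      intro x
      have hcomp : ∀ k, ∑ i, c i * u i k = 0 := by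
        intro k
        have := congrFun hsum k
        simpa using this
      calc ∑ i, c i * (∑ k, u i k * x k)
          = ∑ i, ∑ k, (c i * u i k) * x k := by
            refine Finset.sum_congr rfl fun i _ => ?_
            rw [Finset.mul_sum]
            exact Finset.sum_congr rfl fun k _ => by ring
        _ = ∑ k, (∑ i, c i * u i k) * x k := by
            rw [Finset.sum_comm]
            exact Finset.sum_congr rfl fun k _ => (Finset.sum_mul _ _ _).symm
        _ = 0 := by simp [hcomp]
    obtain ⟨x, hx⟩ := hall (fun i => decide (c i < 0))
    obtain ⟨y, hy⟩ := hall (fun i => decide (0 < c i))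
    rw [Set.mem_iInter] at hx hy
    have hx' : ∀ i ∈ Finset.univ, c i * (d i - ∑ k, u i k * x k) < 0 := by
      intro i _
      have hm := (hmem (fun i => decide (c i < 0)) i x).mp (hx i)
      rcases (hcne i).lt_or_gt with hc | hc
      · rw [if_pos (decide_eq_true hc)] at hm
        exact mul_neg_of_neg_of_pos hc (by linarith)
      · rw [if_neg (by simp [not_lt.mpr hc.le])] at hm
        exact mul_neg_of_pos_of_neg hc (by linarith)
    have hy' : ∀ i ∈ Finset.univ, 0 < c i * (d i - ∑ k, u i k * y k) := by
      intro i _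
      have hm := (hmem (fun i => decide (0 < c i)) i y).mp (hy i)
      rcases (hcne i).lt_or_gt with hc | hc
      · rw [if_neg (by simp [not_lt.mpr hc.le])] at hm
        exact mul_pos_of_neg_of_neg hc (by linarith)
      · rw [if_pos (decide_eq_true hc)] at hm
        exact mul_pos hc (by linarith)
    have hs1 : ∑ i, c i * (d i - ∑ k, u i k * x k) < 0 :=
      Finset.sum_neg hx' ⟨0, Finset.mem_univ 0⟩
    have hs2 : 0 < ∑ i, c i * (d i - ∑ k, u i k * y k) :=
      Finset.sum_pos hy' ⟨0, Finset.mem_univ 0⟩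
    have e1 : ∑ i, c i * (d i - ∑ k, u i k * x k) = ∑ i, c i * d i := by
      simp only [mul_sub, Finset.sum_sub_distrib, hkey x, sub_zero]
    have e2 : ∑ i, c i * (d i - ∑ k, u i k * y k) = ∑ i, c i * d i := by
      simp only [mul_sub, Finset.sum_sub_distrib, hkey y, sub_zero]
    rw [e1] at hs1
    rw [e2] at hs2
    linarith
  · intro hli ε
    have hM : IsUnit (Matrix.of u) := Matrix.linearIndependent_rows_iff_isUnit.mp (by exact hli)
    set t : Fin 3 → ℝ := fun i => if ε i then d i - 1 else d i + 1 with ht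
    refine ⟨(Matrix.of u)⁻¹.mulVec t, ?_⟩
    have hMx : (Matrix.of u).mulVec ((Matrix.of u)⁻¹.mulVec t) = t := by
      rw [Matrix.mulVec_mulVec,
        Matrix.mul_nonsing_inv _ (((Matrix.isUnit_iff_isUnit_det _).mp hM)), Matrix.one_mulVec]
    rw [Set.mem_iInter]
    intro i
    rw [hmem ε i]
    have hfx : (∑ k, u i k * ((Matrix.of u)⁻¹.mulVec t) k) = t i := by
      have := congrFun hMx i
      simpa [Matrix.mulVec, dotProduct] using this
    rw [hfx, ht]
    cases hε : ε i <;> simp [hε]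
end

section
/- (Correctness of the geometric addition construction.) In ℝ², let l_1 and l_3 be distinct lines meeting at the point O, let m be a line parallel to l_3 with m ≠ l_3, and let A, B, C be points on l_3. Let J be the unique point of l_1 ∩ m, let l_A be a line through A that is parallel to or equal to l_1, let l_B be the line through B and J, let M be the unique point of l_A ∩ m, and let l_C be a line through C that is parallel to or equal to l_B and that passes through M. Then C − O = (A − O) + (B − O), i.e. C = A + B − O as vectors in ℝ². -/
/-- A line in the affine plane ℝ²: a one-dimensional affine subspace. -/
def IsLine2 (l : AffineSubspace ℝ (Fin 2 → ℝ)) : Prop :=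
  Module.finrank ℝ l.direction = 1

/-- Two distinct one-dimensional subspaces of ℝ² intersect trivially. -/
lemma aux_inter_trivial {W₁ W₂ : Submodule ℝ (Fin 2 → ℝ)}
    (h₁ : Module.finrank ℝ W₁ = 1) (h₂ : Module.finrank ℝ W₂ = 1)
    (hne : W₁ ≠ W₂) {v : Fin 2 → ℝ} (hv₁ : v ∈ W₁) (hv₂ : v ∈ W₂) : v = 0 := by
  by_contra hv
  have hs₁ : Submodule.span ℝ {v} ≤ W₁ := Submodule.span_le.mpr (by simpa using hv₁)
  have hs₂ : Submodule.span ℝ {v} ≤ W₂ := Submodule.span_le.mpr (by simpa using hv₂)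
  have hr : Module.finrank ℝ (Submodule.span ℝ {v}) = 1 := finrank_span_singleton hv
  have e₁ : Submodule.span ℝ {v} = W₁ :=
    Submodule.eq_of_le_of_finrank_eq hs₁ (by rw [hr, h₁])
  have e₂ : Submodule.span ℝ {v} = W₂ :=
    Submodule.eq_of_le_of_finrank_eq hs₂ (by rw [hr, h₂])
  exact hne (e₁ ▸ e₂)

/-- Correctness of the geometric addition construction: with the configuration of lines
described below, the point C on l₃ satisfies OC = OA + OB, i.e. C = A + B - O. -/
theorem geometric_addition_correct
    (l₁ l₃ m lA lB lC : AffineSubspace ℝ (Fin 2 → ℝ))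
    (hl₁ : IsLine2 l₁) (hl₃ : IsLine2 l₃) (hm : IsLine2 m)
    (hlA : IsLine2 lA) (hlB : IsLine2 lB) (hlC : IsLine2 lC)
    (O A B C J M : Fin 2 → ℝ)
    -- (a) l₁ and l₃ are distinct lines meeting at O
    (hne : l₁ ≠ l₃) (hO₁ : O ∈ l₁) (hO₃ : O ∈ l₃)
    -- (b) m is parallel to l₃ and distinct from it
    (hpar : AffineSubspace.Parallel m l₃) (hmne : m ≠ l₃)
    -- A, B, C lie on l₃
    (hA : A ∈ l₃) (hB : B ∈ l₃) (hC : C ∈ l₃)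
    -- J is the unique point of l₁ ∩ m
    (hJ : (l₁ : Set (Fin 2 → ℝ)) ∩ m = {J})
    -- (c) lA passes through A and is parallel to or equal to l₁
    (hAlA : A ∈ lA) (hlAl₁ : AffineSubspace.Parallel lA l₁)
    -- (d) lB passes through B and J
    (hBlB : B ∈ lB) (hJlB : J ∈ lB)
    -- M is the unique point of lA ∩ m
    (hM : (lA : Set (Fin 2 → ℝ)) ∩ m = {M})
    -- (e) lC passes through C, is parallel to or equal to lB, and passes through M
    (hClC : C ∈ lC) (hlClB : AffineSubspace.Parallel lC lB) (hMlC : M ∈ lC) :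
    C = A + B - O := by
  -- J belongs to l₁ and m
  have hJmem : J ∈ (l₁ : Set (Fin 2 → ℝ)) ∩ m := by rw [hJ]; rfl
  have hJ₁ : J ∈ l₁ := hJmem.1
  have hJm : J ∈ m := hJmem.2
  have hMmem : M ∈ (lA : Set (Fin 2 → ℝ)) ∩ m := by rw [hM]; rfl
  have hMA : M ∈ lA := hMmem.1
  have hMm : M ∈ m := hMmem.2
  -- direction equalities from parallelism
  have hdm : m.direction = l₃.direction := hpar.direction_eq
  have hdA : lA.direction = l₁.direction := hlAl₁.direction_eq
  have hdC : lC.direction = lB.direction := hlClB.direction_eq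
  -- distinct directions
  have hd13 : l₁.direction ≠ l₃.direction := by
    intro h
    exact hne (AffineSubspace.ext_of_direction_eq h ⟨O, hO₁, hO₃⟩)
  have hJ3 : J ∉ l₃ := by
    intro h
    exact hmne (AffineSubspace.ext_of_direction_eq hdm ⟨J, hJm, h⟩)
  have hdB3 : lB.direction ≠ l₃.direction := by
    intro h
    exact hJ3 ((AffineSubspace.ext_of_direction_eq h ⟨B, hBlB, hB⟩) ▸ hJlB)
  -- membership of differences in directions (vsub = sub here)
  have vMA : M - A ∈ l₁.direction := hdA ▸ AffineSubspace.vsub_mem_direction hMA hAlA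
  have vJO : J - O ∈ l₁.direction := AffineSubspace.vsub_mem_direction hJ₁ hO₁
  have vMJ : M - J ∈ l₃.direction := hdm ▸ AffineSubspace.vsub_mem_direction hMm hJm
  have vAO : A - O ∈ l₃.direction := AffineSubspace.vsub_mem_direction hA hO₃
  -- M - A = J - O
  have key1 : (M - A) - (J - O) = 0 := by
    apply aux_inter_trivial hl₃ hl₁ (Ne.symm hd13)
    · have : (M - A) - (J - O) = (M - J) - (A - O) := by ring
      rw [this]; exact Submodule.sub_mem _ vMJ vAO
    · exact Submodule.sub_mem _ vMA vJO
  -- second application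
  have vMC : M - C ∈ lB.direction := hdC ▸ AffineSubspace.vsub_mem_direction hMlC hClC
  have vJB : J - B ∈ lB.direction := AffineSubspace.vsub_mem_direction hJlB hBlB
  have vBC : B - C ∈ l₃.direction := AffineSubspace.vsub_mem_direction hB hC
  have key2 : (M - C) - (J - B) = 0 := by
    apply aux_inter_trivial hl₃ hlB (Ne.symm hdB3)
    · have : (M - C) - (J - B) = ((M - A) - (J - O)) + (A - O) + (B - C) := by ring
      rw [this, key1]
      simpa using Submodule.add_mem _ (Submodule.add_mem _ (Submodule.zero_mem _) vAO) vBC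
    · exact Submodule.sub_mem _ vMC vJB
  have : A + B - O - C = ((M - C) - (J - B)) - ((M - A) - (J - O)) := by ring
  rw [key1, key2] at this
  linear_combination (norm := abel) -this
end

section
/- (Correctness of the geometric multiplication construction.) In ℝ², let l_1 and l_3 be distinct lines meeting at the point O, let I be a point of l_3 with I ≠ O, let J be a point of l_1 with J ≠ O, and let l_2 be the line through I and J. Let A, B, C be points on l_3, let l_A be a line through A that is parallel to or equal to l_2, let l_B be the line through B and J, let M be the unique point of l_A ∩ l_1, and let l_C be a line through C that is parallel to or equal to l_B and passes through M. Writing A − O = α(I − O), B − O = β(I − O) and C − O = γ(I − O) for real scalars α, β, γ, one has γ = α·β. -/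
/-- The direction of a line through two distinct points is spanned by their difference. -/
lemma line_dir_eq (l : AffineSubspace ℝ (Fin 2 → ℝ)) (hl : IsLine2 l)
    {P Q : Fin 2 → ℝ} (hP : P ∈ l) (hQ : Q ∈ l) (h : Q ≠ P) :
    l.direction = Submodule.span ℝ {Q - P} := by
  have hmem : Q - P ∈ l.direction := by
    have := AffineSubspace.vsub_mem_direction hQ hP
    simpa using this
  have hle : Submodule.span ℝ {Q - P} ≤ l.direction := by
    rw [Submodule.span_le, Set.singleton_subset_iff]; exact hmem
  have hne : Q - P ≠ 0 := sub_ne_zero.mpr h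
  exact (Submodule.eq_of_le_of_finrank_eq hle
    (by rw [finrank_span_singleton hne, hl])).symm

/-- Correctness of the geometric multiplication construction: with the configuration of
lines described below and coordinates α, β, γ of A, B, C on l₃ relative to the origin O
and unit I, one has γ = α·β, i.e. OC = OA · OB. -/
theorem geometric_multiplication_correct
    (l₁ l₂ l₃ lA lB lC : AffineSubspace ℝ (Fin 2 → ℝ))
    (hl₁ : IsLine2 l₁) (hl₂ : IsLine2 l₂) (hl₃ : IsLine2 l₃)
    (hlA : IsLine2 lA) (hlB : IsLine2 lB) (hlC : IsLine2 lC)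
    (O I J A B C M : Fin 2 → ℝ) (α β γ : ℝ)
    -- (a) l₁ and l₃ are distinct lines meeting at O; I on l₃, J on l₁, and l₂ passes
    -- through I and J
    (hne : l₁ ≠ l₃) (hO₁ : O ∈ l₁) (hO₃ : O ∈ l₃)
    (hI : I ∈ l₃) (hIO : I ≠ O) (hJ : J ∈ l₁) (hJO : J ≠ O)
    (hIl₂ : I ∈ l₂) (hJl₂ : J ∈ l₂)
    -- A, B, C lie on l₃
    (hA : A ∈ l₃) (hB : B ∈ l₃) (hC : C ∈ l₃)
    -- (b) lA passes through A and is parallel to or equal to l₂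
    (hAlA : A ∈ lA) (hlAl₂ : AffineSubspace.Parallel lA l₂)
    -- (c) lB passes through B and J
    (hBlB : B ∈ lB) (hJlB : J ∈ lB)
    -- M is the unique point of lA ∩ l₁
    (hM : (lA : Set (Fin 2 → ℝ)) ∩ l₁ = {M})
    -- (d) lC passes through C, is parallel to or equal to lB, and passes through M
    (hClC : C ∈ lC) (hlClB : AffineSubspace.Parallel lC lB) (hMlC : M ∈ lC)
    -- coordinates of A, B, C on l₃ with origin O and unit I
    (hα : A - O = α • (I - O)) (hβ : B - O = β • (I - O)) (hγ : C - O = γ • (I - O)) :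
    γ = α * β := by
  set u := J - O with hu
  set v := I - O with hv
  have hv0 : v ≠ 0 := sub_ne_zero.mpr hIO
  have hu0 : u ≠ 0 := sub_ne_zero.mpr hJO
  have hd₁ : l₁.direction = Submodule.span ℝ {u} := line_dir_eq l₁ hl₁ hO₁ hJ hJO
  have hd₃ : l₃.direction = Submodule.span ℝ {v} := line_dir_eq l₃ hl₃ hO₃ hI hIO
  -- u ∉ span {v}
  have huv : u ∉ Submodule.span ℝ {v} := by
    intro hmem
    have hle : Submodule.span ℝ {u} ≤ Submodule.span ℝ {v} := by
      rw [Submodule.span_le, Set.singleton_subset_iff]; exact hmem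
    have heq : Submodule.span ℝ ({u} : Set (Fin 2 → ℝ)) = Submodule.span ℝ {v} :=
      Submodule.eq_of_le_of_finrank_eq hle
        (by rw [finrank_span_singleton hu0, finrank_span_singleton hv0])
    exact hne (AffineSubspace.ext_of_direction_eq (by rw [hd₁, hd₃, heq]) ⟨O, hO₁, hO₃⟩)
  -- linear independence
  have hindep : ∀ a b : ℝ, a • u + b • v = 0 → a = 0 ∧ b = 0 := by
    intro a b h
    have ha : a = 0 := by
      by_contra ha
      apply huv
      have h1 : a • u = (-b) • v := by linear_combination (norm := module) h
      have h2 : a • u ∈ Submodule.span ℝ {v} :=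
        h1 ▸ Submodule.smul_mem _ (-b) (Submodule.mem_span_singleton_self v)
      have h3 := Submodule.smul_mem (Submodule.span ℝ {v}) a⁻¹ h2
      rwa [inv_smul_smul₀ ha] at h3
    refine ⟨ha, ?_⟩
    rw [ha, zero_smul, zero_add] at h
    exact (smul_eq_zero.mp h).resolve_right hv0
  -- J ≠ I and J ≠ B
  have hJI : J ≠ I := by
    intro h
    exact huv (by rw [hu, h, ← hv]; exact Submodule.mem_span_singleton_self v)
  have hJB : J ≠ B := by
    intro h
    apply huv
    have : J - O ∈ l₃.direction := by
      have := AffineSubspace.vsub_mem_direction (h ▸ hB) hO₃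
      simpa using this
    rwa [hd₃, ← hu] at this
  -- M ∈ lA and M ∈ l₁
  have hM' : M ∈ (lA : Set (Fin 2 → ℝ)) ∩ l₁ := by rw [hM]; rfl
  obtain ⟨hMlA, hMl₁⟩ := hM'
  -- M - O = s • u
  have hMO : M - O ∈ Submodule.span ℝ {u} := by
    rw [← hd₁]
    have := AffineSubspace.vsub_mem_direction hMl₁ hO₁
    simpa using this
  obtain ⟨s, hs⟩ := Submodule.mem_span_singleton.mp hMO
  -- M - A = t • (u - v)
  have hd₂ : l₂.direction = Submodule.span ℝ {J - I} := line_dir_eq l₂ hl₂ hIl₂ hJl₂ hJI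
  have hMA : M - A ∈ Submodule.span ℝ {J - I} := by
    rw [← hd₂, ← hlAl₂.direction_eq]
    have := AffineSubspace.vsub_mem_direction hMlA hAlA
    simpa using this
  obtain ⟨t, ht⟩ := Submodule.mem_span_singleton.mp hMA
  -- from (M-O) - (M-A) = A - O = α • v, get s = t = α
  have hJIuv : J - I = u - v := by rw [hu, hv]; abel
  rw [hJIuv] at ht
  have key1 : (s - t) • u + (t - α) • v = 0 := by
    linear_combination (norm := module) hs - ht + hα
  obtain ⟨hst, htα⟩ := hindep _ _ key1
  have hsα : s = α := by linarith [sub_eq_zero.mp hst, sub_eq_zero.mp htα]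
  -- C - M = r • (J - B), J - B = u - β • v
  have hdB : lB.direction = Submodule.span ℝ {J - B} := line_dir_eq lB hlB hBlB hJlB hJB
  have hCM : C - M ∈ Submodule.span ℝ {J - B} := by
    rw [← hdB, ← hlClB.direction_eq]
    have := AffineSubspace.vsub_mem_direction hClC hMlC
    simpa using this
  obtain ⟨r, hr⟩ := Submodule.mem_span_singleton.mp hCM
  have hJBuv : J - B = u - β • v := by
    linear_combination (norm := module) -hβ - hu
  rw [hJBuv] at hr
  -- C - M = (C - O) - (M - O) = γ • v - α • u
  have key2 : (r + α) • u + (-(r * β) - γ) • v = 0 := by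
    have hsu : M - O = α • u := by rw [← hsα]; exact hs.symm
    linear_combination (norm := module) hr - hsu + hγ
  obtain ⟨hr1, hr2⟩ := hindep _ _ key2
  linear_combination -hr2 - β * hr1
end
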